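/- Let d ≥ 1 be an integer and let t_{-d} < t_{-d+1} < ⋯ < t_{2d+1} be strictly increasing real numbers. Then the (2d+1)×(2d+1) matrix M_0 with entries M_0(δ, γ) := Δ[t_{γ:γ+d+1}] p_{d+1+δ} (rows δ = 0, …, 2d, columns γ = -d, …, d) is invertible. -/

import Mathlib

open MeasureTheory

/-- Divided difference `Δ[t_i, ..., t_j] h`, defined recursively:
`Δ[t_i] h = h (t i)` and
`Δ[t_{i:j}] h = (Δ[t_{i+1:j}] h - Δ[t_{i:j-1}] h) / (t j - t i)` for `i < j`. -/
noncomputable def dd (t : ℤ → ℝ) (h : ℝ → ℝ) (i j : ℤ) : ℝ :=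
  if _hij : i < j then
    (dd t h (i + 1) j - dd t h i (j - 1)) / (t j - t i)
  else h (t i)
termination_by (j - i).toNat
decreasing_by
  · omega
  · omega

lemma dd_of_lt (t : ℤ → ℝ) (h : ℝ → ℝ) {i j : ℤ} (hij : i < j) :
    dd t h i j = (dd t h (i + 1) j - dd t h i (j - 1)) / (t j - t i) := by
  rw [dd]; simp [hij]

lemma dd_self (t : ℤ → ℝ) (h : ℝ → ℝ) {i j : ℤ} (hij : ¬ i < j) :
    dd t h i j = h (t i) := by
  rw [dd]; simp [hij]

lemma dd_congr (t : ℤ → ℝ) (h g : ℝ → ℝ) (i j : ℤ) (hij : i ≤ j)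
    (hfg : ∀ k, i ≤ k → k ≤ j → h (t k) = g (t k)) : dd t h i j = dd t g i j := by
  by_cases hlt : i < j
  · rw [dd_of_lt t h hlt, dd_of_lt t g hlt,
      dd_congr t h g (i+1) j (by omega) (fun k hk1 hk2 => hfg k (by omega) hk2),
      dd_congr t h g i (j-1) (by omega) (fun k hk1 hk2 => hfg k hk1 (by omega))]
  · rw [dd_self t h hlt, dd_self t g hlt]
    exact hfg i le_rfl hij
termination_by (j - i).toNat
decreasing_by all_goals omega

lemma dd_add (t : ℤ → ℝ) (h g : ℝ → ℝ) (i j : ℤ) :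
    dd t (fun x => h x + g x) i j = dd t h i j + dd t g i j := by
  by_cases hlt : i < j
  · rw [dd_of_lt _ _ hlt, dd_of_lt _ _ hlt, dd_of_lt _ _ hlt,
      dd_add t h g (i+1) j, dd_add t h g i (j-1)]
    ring
  · rw [dd_self _ _ hlt, dd_self _ _ hlt, dd_self _ _ hlt]
termination_by (j - i).toNat
decreasing_by all_goals omega

lemma dd_smul (t : ℤ → ℝ) (a : ℝ) (h : ℝ → ℝ) (i j : ℤ) :
    dd t (fun x => a * h x) i j = a * dd t h i j := by
  by_cases hlt : i < j
  · rw [dd_of_lt _ _ hlt, dd_of_lt _ _ hlt,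
      dd_smul t a h (i+1) j, dd_smul t a h i (j-1)]
    ring
  · rw [dd_self _ _ hlt, dd_self _ _ hlt]
termination_by (j - i).toNat
decreasing_by all_goals omega

lemma dd_zero (t : ℤ → ℝ) (i j : ℤ) : dd t (fun _ => (0:ℝ)) i j = 0 := by
  by_cases hlt : i < j
  · rw [dd_of_lt _ _ hlt, dd_zero t (i+1) j, dd_zero t i (j-1)]
    simp
  · rw [dd_self _ _ hlt]
termination_by (j - i).toNat
decreasing_by all_goals omega

lemma dd_sum {α : Type*} (t : ℤ → ℝ) (s : Finset α) (f : α → ℝ → ℝ) (i j : ℤ) :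
    dd t (fun x => ∑ k ∈ s, f k x) i j = ∑ k ∈ s, dd t (f k) i j := by
  classical
  induction s using Finset.induction with
  | empty => simpa using dd_zero t i j
  | insert a s hk ih =>
    simp only [Finset.sum_insert hk, dd_add, ih]

lemma dd_const (t : ℤ → ℝ) (c : ℝ) {i j : ℤ} (hij : i < j) :
    dd t (fun _ => c) i j = 0 := by
  rw [dd_of_lt _ _ hij]
  by_cases hlt : i + 1 < j
  · rw [dd_const t c hlt, dd_const t c (show i < j - 1 by omega)]
    simp
  · rw [dd_self _ _ hlt, dd_self _ _ (show ¬ i < j - 1 by omega)]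
    simp
termination_by (j - i).toNat
decreasing_by all_goals omega

lemma dd_shift (t : ℤ → ℝ) (h : ℝ → ℝ) (i j : ℤ) (hij : i ≤ j)
    (hmono : ∀ a b : ℤ, i ≤ a → a < b → b ≤ j → t a < t b) :
    dd t (fun x => x * h x) i j
      = t j * dd t h i j + (if i = j then 0 else dd t h i (j-1)) := by
  rcases eq_or_lt_of_le hij with rfl | hlt
  · rw [if_pos rfl, dd_self _ _ (lt_irrefl i), dd_self _ _ (lt_irrefl i)]
    ring
  rw [if_neg (by omega)]
  have hji : t j - t i ≠ 0 := sub_ne_zero.mpr (ne_of_gt (hmono i j le_rfl hlt le_rfl))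
  by_cases h2 : i + 1 < j
  · -- general case
    have hj1i : t (j-1) - t i ≠ 0 :=
      sub_ne_zero.mpr (ne_of_gt (hmono i (j-1) le_rfl (by omega) (by omega)))
    have e1 := dd_shift t h (i+1) j (by omega)
      (fun a b ha hab hb => hmono a b (by omega) hab hb)
    have e2 := dd_shift t h i (j-1) (by omega)
      (fun a b ha hab hb => hmono a b ha hab (by omega))
    rw [if_neg (by omega)] at e1
    rw [if_neg (by omega)] at e2
    rw [dd_of_lt _ _ hlt, e1, e2,
      dd_of_lt t h hlt, dd_of_lt t h (show i < j - 1 by omega)]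
    have hjj : j - 1 - 1 = j - 2 := by ring
    rw [hjj]
    field_simp
    ring
  · -- j = i + 1
    obtain rfl : j = i + 1 := by omega
    rw [dd_of_lt _ _ hlt, dd_of_lt t h hlt]
    have h1 : ¬ i + 1 < i + 1 := by omega
    have h2 : ¬ i < i + 1 - 1 := by omega
    rw [dd_self _ _ h1, dd_self _ _ h2, dd_self _ _ h1, dd_self _ _ h2]
    field_simp
    ring
termination_by (j - i).toNat
decreasing_by all_goals omega

lemma dd_pow_eq_zero (t : ℤ → ℝ) (m : ℕ) (i j : ℤ)
    (hmono : ∀ a b : ℤ, i ≤ a → a < b → b ≤ j → t a < t b)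
    (hm : (m : ℤ) < j - i) :
    dd t (fun x => x ^ m) i j = 0 := by
  match m with
  | 0 =>
    have : (fun x : ℝ => x ^ 0) = fun _ => (1:ℝ) := by funext x; simp
    rw [this, dd_const t 1 (by omega)]
  | Nat.succ m =>
    have hij : i < j := by omega
    have hpow : (fun x : ℝ => x ^ (m+1)) = fun x => x * x ^ m := by
      funext x; ring
    have e1 := dd_shift t (fun x => x ^ m) i j (by omega) hmono
    rw [if_neg (by omega)] at e1
    have h2 : dd t (fun x => x ^ m) i j = 0 :=
      dd_pow_eq_zero t m i j hmono (by push_cast at hm ⊢; omega)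
    have h3 : dd t (fun x => x ^ m) i (j-1) = 0 :=
      dd_pow_eq_zero t m i (j-1)
        (fun a b ha hab hb => hmono a b ha hab (by omega))
        (by push_cast at hm ⊢; omega)
    rw [hpow, e1, h2, h3]
    ring

noncomputable def ddw (t : ℤ → ℝ) (i j k : ℤ) : ℝ :=
  dd t (fun x => if x = t k then 1 else 0) i j

lemma ddw_eq_zero (t : ℤ → ℝ) (i j k : ℤ) (hij : i ≤ j)
    (hk : ∀ l, i ≤ l → l ≤ j → t l ≠ t k) : ddw t i j k = 0 := by
  rw [ddw, dd_congr t _ (fun _ => (0:ℝ)) i j hij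
    (fun l h1 h2 => by simp [hk l h1 h2]), dd_zero]

lemma ddw_left_ne_zero (t : ℤ → ℝ) (i j : ℤ) (hij : i ≤ j)
    (hmono : ∀ a b : ℤ, i ≤ a → a < b → b ≤ j → t a < t b) :
    ddw t i j i ≠ 0 := by
  rcases eq_or_lt_of_le hij with rfl | hlt
  · rw [ddw, dd_self _ _ (lt_irrefl i)]
    simp
  · have h1 : dd t (fun x => if x = t i then 1 else 0) (i+1) j = 0 := by
      have := ddw_eq_zero t (i+1) j i (by omega)
        (fun l hl1 hl2 => ne_of_gt (hmono i l le_rfl (by omega) hl2))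
      rwa [ddw] at this
    have h2 : ddw t i (j-1) i ≠ 0 :=
      ddw_left_ne_zero t i (j-1) (by omega)
        (fun a b ha hab hb => hmono a b ha hab (by omega))
    rw [ddw, dd_of_lt _ _ hlt, h1]
    have hji : t j - t i ≠ 0 := sub_ne_zero.mpr (ne_of_gt (hmono i j le_rfl hlt le_rfl))
    rw [ddw] at h2
    exact div_ne_zero (by simpa using h2) hji
termination_by (j - i).toNat
decreasing_by all_goals omega

lemma dd_eq_sum (t : ℤ → ℝ) (h : ℝ → ℝ) (i j : ℤ) (hij : i ≤ j)
    (hmono : ∀ a b : ℤ, i ≤ a → a < b → b ≤ j → t a < t b) :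
    dd t h i j = ∑ k ∈ Finset.Icc i j, h (t k) * ddw t i j k := by
  have hinj : ∀ k l, i ≤ k → k ≤ j → i ≤ l → l ≤ j → t k = t l → k = l := by
    intro k l hk1 hk2 hl1 hl2 hkl
    by_contra hne
    rcases lt_or_gt_of_ne hne with hlt | hlt
    · exact absurd hkl (ne_of_lt (hmono k l hk1 hlt hl2))
    · exact absurd hkl.symm (ne_of_lt (hmono l k hl1 hlt hk2))
  have step1 : dd t h i j
      = dd t (fun x => ∑ k ∈ Finset.Icc i j, h (t k) * (if x = t k then 1 else 0)) i j := by
    apply dd_congr t _ _ i j hij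
    intro l hl1 hl2
    rw [Finset.sum_eq_single_of_mem l (Finset.mem_Icc.mpr ⟨hl1, hl2⟩)]
    · simp
    · intro k hk hkl
      have : t l ≠ t k := fun e => hkl (hinj k l (Finset.mem_Icc.mp hk).1 (Finset.mem_Icc.mp hk).2 hl1 hl2 e.symm)
      simp [this]
  rw [step1, dd_sum]
  refine Finset.sum_congr rfl (fun k _ => ?_)
  rw [dd_smul, ddw]

/-- The SIAC constraint matrix `M₀` with entries
`M₀(δ, γ) = Δ[t_{γ:γ+d+1}] (·)^{d+1+δ}` (rows `δ = 0..2d`, columns `γ = -d..d`)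
is invertible. -/
theorem stmt1 (d : ℕ) (hd : 1 ≤ d) (t : ℤ → ℝ)
    (ht : ∀ i : ℤ, -(d : ℤ) ≤ i → i < 2 * d + 1 → t i < t (i + 1))
    (M : Matrix (Fin (2 * d + 1)) (Fin (2 * d + 1)) ℝ)
    (hM : ∀ δ γ : Fin (2 * d + 1),
      M δ γ = dd t (fun u => u ^ (d + 1 + (δ : ℕ)))
        (((γ : ℕ) : ℤ) - d) ((((γ : ℕ) : ℤ) - d) + (d + 1))) :
    IsUnit M := by
  classical
  -- t is strictly increasing on Icc (-d) (2d+1)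
  have tmono : ∀ x y : ℤ, -(d:ℤ) ≤ x → x < y → y ≤ 2*(d:ℤ)+1 → t x < t y := by
    intro x y hx hxy hy
    have key : ∀ n : ℕ, x + n + 1 ≤ 2*(d:ℤ)+1 → t x < t (x + n + 1) := by
      intro n
      induction n with
      | zero => intro h2; simpa using ht x hx (by omega)
      | succ n ih =>
        intro h2
        have h1 := ih (by push_cast at h2 ⊢; omega)
        have h3 := ht (x+n+1) (by omega) (by push_cast at h2 ⊢; omega)
        have he : x + ((n+1:ℕ):ℤ) + 1 = (x + n + 1) + 1 := by push_cast; ring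
        rw [he]
        exact h1.trans h3
    have hy' : y = x + ((y - x - 1).toNat : ℤ) + 1 := by omega
    rw [hy']
    exact key _ (by omega)
  have wmono : ∀ γ : Fin (2*d+1), ∀ x y : ℤ, ((γ:ℕ):ℤ) - d ≤ x → x < y →
      y ≤ (((γ:ℕ):ℤ) - d) + ((d:ℤ)+1) → t x < t y := by
    intro γ x y hx hxy hy
    have hγ := γ.isLt
    exact tmono x y (by omega) hxy (by omega)
  rw [Matrix.isUnit_iff_isUnit_det, isUnit_iff_ne_zero]
  intro hdet
  obtain ⟨c, hc0, hc⟩ := Matrix.exists_mulVec_eq_zero_iff.mpr hdet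
  set nidx := Finset.Icc (-(d:ℤ)) (2*(d:ℤ)+1) with hnidx
  set b : ℤ → ℝ := fun k => ∑ γ : Fin (2*d+1),
    c γ * ddw t (((γ:ℕ):ℤ) - d) ((((γ:ℕ):ℤ) - d) + ((d:ℤ)+1)) k with hb
  -- Claim 1
  have claim1 : ∀ m : ℕ, m ≤ 3*d+1 → ∑ k ∈ nidx, b k * t k ^ m = 0 := by
    intro m hm
    have inner : ∀ γ : Fin (2*d+1),
        ∑ k ∈ nidx, (t k ^ m) * ddw t (((γ:ℕ):ℤ) - d) ((((γ:ℕ):ℤ) - d) + ((d:ℤ)+1)) k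
        = dd t (fun x => x ^ m) (((γ:ℕ):ℤ) - d) ((((γ:ℕ):ℤ) - d) + ((d:ℤ)+1)) := by
      intro γ
      have hγ := γ.isLt
      rw [dd_eq_sum t _ _ _ (by omega) (wmono γ)]
      refine (Finset.sum_subset ?_ ?_).symm
      · intro k hk
        rw [Finset.mem_Icc] at hk ⊢
        omega
      · intro k hk hknot
        rw [Finset.mem_Icc] at hk
        have hor : k < ((γ:ℕ):ℤ) - d ∨ (((γ:ℕ):ℤ) - d) + ((d:ℤ)+1) < k := by
          rw [Finset.mem_Icc] at hknot; omega
        rw [ddw_eq_zero t _ _ k (by omega) ?_, mul_zero]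
        intro l hl1 hl2
        rcases hor with hor | hor
        · exact ne_of_gt (tmono k l hk.1 (by omega) (by omega))
        · exact ne_of_lt (tmono l k (by omega) (by omega) hk.2)
    have swap : ∑ k ∈ nidx, b k * t k ^ m
        = ∑ γ : Fin (2*d+1), c γ *
            dd t (fun x => x ^ m) (((γ:ℕ):ℤ) - d) ((((γ:ℕ):ℤ) - d) + ((d:ℤ)+1)) := by
      simp only [hb, Finset.sum_mul]
      rw [Finset.sum_comm]
      refine Finset.sum_congr rfl (fun γ _ => ?_)
      rw [← inner γ, Finset.mul_sum]
      refine Finset.sum_congr rfl (fun k _ => ?_)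
      ring
    rw [swap]
    by_cases hmd : m ≤ d
    · refine Finset.sum_eq_zero (fun γ _ => ?_)
      rw [dd_pow_eq_zero t m _ _ (wmono γ) (by omega), mul_zero]
    · have hδ : m - (d+1) < 2*d+1 := by omega
      have hrow := congrFun hc ⟨m - (d+1), hδ⟩
      simp only [Matrix.mulVec, dotProduct, Pi.zero_apply] at hrow
      rw [← hrow]
      refine Finset.sum_congr rfl (fun γ _ => ?_)
      rw [hM]
      have hexp : (fun u : ℝ => u ^ (d + 1 + ((⟨m - (d+1), hδ⟩ : Fin (2*d+1)) : ℕ)))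
          = fun x : ℝ => x ^ m := by
        funext u
        congr 1
        show d + 1 + (m - (d+1)) = m
        omega
      rw [hexp]
      ring
  -- reindexing
  have himg : nidx = Finset.image (fun k : Fin (3*d+2) => ((k:ℕ):ℤ) - (d:ℤ)) Finset.univ := by
    ext j
    simp only [hnidx, Finset.mem_Icc, Finset.mem_image, Finset.mem_univ, true_and]
    constructor
    · rintro ⟨h1, h2⟩
      refine ⟨⟨(j+d).toNat, by omega⟩, ?_⟩
      show (((j+d).toNat : ℕ) : ℤ) - d = j
      omega
    · rintro ⟨k, rfl⟩
      have := k.isLt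
      omega
  have hinjmap : ∀ k ∈ (Finset.univ : Finset (Fin (3*d+2))), ∀ l ∈ (Finset.univ : Finset (Fin (3*d+2))),
      ((k:ℕ):ℤ) - (d:ℤ) = ((l:ℕ):ℤ) - (d:ℤ) → k = l := by
    intro k _ l _ hkl
    exact Fin.ext (by omega)
  have reindex : ∀ f : ℤ → ℝ,
      ∑ j ∈ nidx, f j = ∑ k : Fin (3*d+2), f (((k:ℕ):ℤ) - d) := by
    intro f
    rw [himg, Finset.sum_image hinjmap]
  -- Vandermonde: b vanishes at all nodes
  have vdm : ∀ k : Fin (3*d+2), b (((k:ℕ):ℤ) - d) = 0 := by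
    set v : Fin (3*d+2) → ℝ := fun k => t (((k:ℕ):ℤ) - d) with hv
    have hvinj : Function.Injective v := by
      intro k l hkl
      by_contra hne
      have hne' : (k:ℕ) ≠ (l:ℕ) := fun e => hne (Fin.ext e)
      have hk := k.isLt
      have hl := l.isLt
      rcases lt_or_gt_of_ne hne' with h | h
      · exact absurd hkl (ne_of_lt (tmono _ _ (by omega) (by omega) (by omega)))
      · exact absurd hkl.symm (ne_of_lt (tmono _ _ (by omega) (by omega) (by omega)))
    have hdet' : (Matrix.transpose (Matrix.vandermonde v)).det ≠ 0 := by
      rw [Matrix.det_transpose]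
      exact Matrix.det_vandermonde_ne_zero_iff.mpr hvinj
    set u : Fin (3*d+2) → ℝ := fun k => b (((k:ℕ):ℤ) - d) with hu
    have hmv : Matrix.mulVec (Matrix.transpose (Matrix.vandermonde v)) u = 0 := by
      funext m
      have hm1 := claim1 (m:ℕ) (by have := m.isLt; omega)
      rw [reindex (fun j => b j * t j ^ (m:ℕ))] at hm1
      simp only [Matrix.mulVec, dotProduct, Matrix.transpose_apply,
        Matrix.vandermonde_apply, Pi.zero_apply, hu, hv]
      rw [← hm1]
      exact Finset.sum_congr rfl (fun k _ => by ring)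
    have := Matrix.eq_zero_of_mulVec_eq_zero hdet' hmv
    intro k
    have h0 := congrFun this k
    simpa [hu] using h0
  -- Conclude c = 0 by strong induction
  have claim3 : ∀ n : ℕ, ∀ γ : Fin (2*d+1), (γ:ℕ) = n → c γ = 0 := by
    intro n
    induction n using Nat.strong_induction_on with
    | _ n ih =>
      intro γ hγn
      have hγ := γ.isLt
      have hb0 : b (((γ:ℕ):ℤ) - d) = 0 := by
        have h0 := vdm ⟨(γ:ℕ), by omega⟩
        simpa using h0
      simp only [hb] at hb0
      rw [Finset.sum_eq_single γ ?_ ?_] at hb0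
      · have hne := ddw_left_ne_zero t (((γ:ℕ):ℤ) - d)
          ((((γ:ℕ):ℤ) - d) + ((d:ℤ)+1)) (by omega) (wmono γ)
        exact (mul_eq_zero.mp hb0).resolve_right hne
      · intro γ' _ hne'
        have hγ' := γ'.isLt
        have hvne : (γ':ℕ) ≠ (γ:ℕ) := fun e => hne' (Fin.ext e)
        rcases lt_or_gt_of_ne hvne with h | h
        · rw [ih (γ':ℕ) (by omega) γ' rfl, zero_mul]
        · rw [ddw_eq_zero t _ _ _ (by omega) ?_, mul_zero]
          intro l hl1 hl2
          exact ne_of_gt (tmono (((γ:ℕ):ℤ)-d) l (by omega) (by omega) (by omega))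
      · intro habs
        exact absurd (Finset.mem_univ γ) habs
  apply hc0
  funext γ
  exact claim3 (γ:ℕ) γ rfl
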